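/- Higher-order derivative of a product of two resolvents: for C^m curves S(t), T(t) and resolvents R_1 = (ζ_1 I − S)^{-1}, R_2 = (ζ_2 I − T)^{-1}, the l-th derivative of R_1 R_2 equals the sum over index tuples (i_1,...,i_k)∪(i_{k+1},...,i_j) with i_1+...+i_j = l of (l!/(i_1!···i_j!)) R_1 S^{(i_1)} R_1 ··· S^{(i_k)} R_1 R_2 T^{(i_{k+1})} R_2 ··· T^{(i_j)} R_2. -/

import Mathlib

attribute [local instance] Matrix.normedAddCommGroup Matrix.normedSpace

/-! ### Auxiliary lemmas -/

section Aux

theorem pascal_sum' {M : Type*} [AddCommGroup M] [Module ℂ M] (k : ℕ) (C : ℕ → ℕ → M) :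
    ∑ i ∈ Finset.range (k + 1), ((k.choose i : ℂ)) • (C (i + 1) (k - i) + C i (k + 1 - i)) =
      ∑ i ∈ Finset.range (k + 2), (((k + 1).choose i : ℂ)) • C i (k + 1 - i) := by
  rw [Finset.sum_range_succ' (f := fun i => (((k + 1).choose i : ℂ)) • C i (k + 1 - i))]
  simp only [Nat.succ_sub_succ, Nat.choose_succ_succ', Nat.choose_zero_right, Nat.cast_add,
    add_smul, smul_add, Finset.sum_add_distrib, Nat.sub_zero, Nat.cast_one, one_smul]
  rw [add_assoc]
  congr 1
  rw [Finset.sum_range_succ' (f := fun i => ((k.choose i : ℂ)) • C i (k + 1 - i))]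
  rw [Finset.sum_range_succ (f := fun i => ((k.choose (i + 1) : ℂ)) • C (i + 1) (k - i))]
  simp [Nat.succ_sub_succ, Nat.choose_succ_self]

/-- Splitting off the first block of a composition of `p + 1`. -/
def splitComp (p : ℕ) : Composition (p + 1) ≃ Σ i : Fin (p + 1), Composition (p - i) where
  toFun c :=
    have hne : c.blocks ≠ [] := by
      intro h
      have := c.blocks_sum
      simp [h] at this
    have hb : 1 ≤ c.blocks.head hne := c.blocks_pos (List.head_mem hne)
    have hsum : c.blocks.head hne + c.blocks.tail.sum = p + 1 := by
      have h2 := congrArg List.sum (List.cons_head_tail hne)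
      rw [List.sum_cons, c.blocks_sum] at h2
      exact h2
    ⟨⟨c.blocks.head hne - 1, by omega⟩,
      ⟨c.blocks.tail, fun hi => c.blocks_pos (List.mem_of_mem_tail hi), by simp; omega⟩⟩
  invFun x :=
    ⟨((x.1 : ℕ) + 1) :: x.2.blocks, by
      intro i hi
      rcases List.mem_cons.mp hi with rfl | h
      · omega
      · exact x.2.blocks_pos h, by
      have h1 := x.2.blocks_sum
      have h2 := x.1.isLt
      rw [List.sum_cons, h1]; omega⟩
  left_inv c := by
    have hne : c.blocks ≠ [] := by
      intro h
      have := c.blocks_sum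
      simp [h] at this
    have hb : 1 ≤ c.blocks.head hne := c.blocks_pos (List.head_mem hne)
    ext1
    show (c.blocks.head hne - 1 + 1) :: c.blocks.tail = c.blocks
    rw [Nat.sub_add_cancel hb, List.cons_head_tail]
  right_inv x := by
    rcases x with ⟨⟨i, hi⟩, c⟩
    rfl

theorem comp_zero_sum {M : Type*} [AddCommMonoid M] (F : List ℕ → M) :
    ∑ c : Composition 0, F c.blocks = F [] := by
  have hb : ∀ c : Composition 0, c.blocks = [] := by
    intro c
    cases h : c.blocks with
    | nil => rfl
    | cons a l =>
      have h1 := c.blocks_sum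
      have h2 := c.blocks_pos (by rw [h]; exact List.mem_cons_self)
      rw [h, List.sum_cons] at h1
      omega
  letI : Unique (Composition 0) :=
    { default := Composition.ones 0,
      uniq := fun c => by ext1; rw [hb c]; simp }
  rw [Finset.univ_unique, Finset.sum_singleton]
  have : (default : Composition 0).blocks = [] := hb _
  rw [this]

theorem comp_sum_succ {M : Type*} [AddCommMonoid M] (p : ℕ) (F : List ℕ → M) :
    ∑ c : Composition (p + 1), F c.blocks =
      ∑ i : Fin (p + 1), ∑ c : Composition (p - (i : ℕ)), F (((i : ℕ) + 1) :: c.blocks) := by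
  have h1 : ∑ c : Composition (p + 1), F c.blocks
      = ∑ x : Σ i : Fin (p + 1), Composition (p - (i : ℕ)),
          F (((x.1 : ℕ) + 1) :: x.2.blocks) :=
    Fintype.sum_equiv (splitComp p) _ _ fun c => by
      conv_lhs => rw [← (splitComp p).left_inv c]
      rfl
  rw [h1, ← Finset.univ_sigma_univ, Finset.sum_sigma]

theorem iteratedDeriv_const'' {F' : Type*} [NormedAddCommGroup F'] [NormedSpace ℝ F']
    {k : ℕ} (hk : k ≠ 0) (c : F') (x : ℝ) : iteratedDeriv k (fun _ : ℝ => c) x = 0 := by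
  rw [iteratedDeriv_eq_iteratedFDeriv, iteratedFDeriv_const_of_ne hk]
  rfl

theorem fact_list_prod_pos (L : List ℕ) : 0 < (L.map Nat.factorial).prod := by
  apply List.prod_pos
  intro a ha
  rcases List.mem_map.mp ha with ⟨b, _, rfl⟩
  exact Nat.factorial_pos b

end Aux

section MatrixCalc

variable {n : ℕ}

local notation "Mx" => Matrix (Fin n) (Fin n) ℂ

theorem cd_entry {N : ℕ} {f : ℝ → Mx} (hf : ContDiff ℝ N f) (i j : Fin n) :
    ContDiff ℝ N fun t => f t i j :=
  (contDiff_pi.mp ((contDiff_pi.mp hf) i)) j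

theorem cd_det {N : ℕ} {f : ℝ → Mx} (hf : ContDiff ℝ N f) :
    ContDiff ℝ N fun t => (f t).det := by
  simp only [Matrix.det_apply]
  apply ContDiff.sum
  intro σ _
  have h1 : ContDiff ℝ N fun t => ∏ i, f t (σ i) i :=
    contDiff_prod fun i _ => cd_entry hf (σ i) i
  have h2 := (contDiff_const (c := ((Equiv.Perm.sign σ : ℤ) : ℂ))).mul h1
  convert h2 using 2 with t
  · rfl
  · rfl
  · simp [Units.smul_def, zsmul_eq_mul]

theorem cd_adj {N : ℕ} {f : ℝ → Mx} (hf : ContDiff ℝ N f) :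
    ContDiff ℝ N fun t => (f t).adjugate := by
  apply contDiff_pi.mpr; intro i; apply contDiff_pi.mpr; intro j
  have h1 : ContDiff ℝ N fun t => (f t).updateRow j (Pi.single i 1) := by
    apply contDiff_pi.mpr; intro a; apply contDiff_pi.mpr; intro b
    rcases eq_or_ne a j with rfl | han
    · simpa [Matrix.updateRow_apply] using contDiff_const
    · simpa [Matrix.updateRow_apply, han] using cd_entry hf a b
  simpa [Matrix.adjugate_apply] using cd_det h1

theorem resolvent_smooth {N : ℕ} {f : ℝ → Mx} (hf : ContDiff ℝ N f)
    {t₀ : ℝ} (h : IsUnit (f t₀)) :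
    ∃ U : Set ℝ, IsOpen U ∧ t₀ ∈ U ∧ (∀ t ∈ U, IsUnit (f t)) ∧
      ContDiffOn ℝ N (fun t => (f t)⁻¹) U := by
  refine ⟨{t : ℝ | (f t).det ≠ 0}, ?_, ?_, ?_, ?_⟩
  · exact isOpen_ne.preimage ((cd_det hf).continuous)
  · exact ((Matrix.isUnit_iff_isUnit_det _).mp h).ne_zero
  · intro t ht; exact (Matrix.isUnit_iff_isUnit_det _).mpr (isUnit_iff_ne_zero.mpr ht)
  · have hinv : ContDiffOn ℝ N (fun t => ((f t).det)⁻¹) {t : ℝ | (f t).det ≠ 0} :=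
      ((cd_det hf).contDiffOn).inv fun x hx => hx
    have heq : ∀ t, (f t)⁻¹ = Matrix.of fun i j => ((f t).det)⁻¹ * (f t).adjugate i j := by
      intro t
      rw [Matrix.inv_def, Ring.inverse_eq_inv']
      ext i j; simp [Matrix.smul_apply, smul_eq_mul]
    simp only [heq]
    apply contDiffOn_pi.mpr; intro i; apply contDiffOn_pi.mpr; intro j
    exact hinv.mul ((cd_entry (cd_adj hf) i j).contDiffOn)

theorem hdmul {f g : ℝ → Mx} {f' g' : Mx} {x : ℝ}
    (hf : HasDerivAt f f' x) (hg : HasDerivAt g g' x) :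
    HasDerivAt (fun t => f t * g t) (f' * g x + f x * g') x := by
  apply hasDerivAt_pi.mpr; intro i; apply hasDerivAt_pi.mpr; intro j
  have h := HasDerivAt.fun_sum (u := Finset.univ) fun k _ =>
    ((hasDerivAt_pi.mp (hasDerivAt_pi.mp hf i)) k).mul ((hasDerivAt_pi.mp (hasDerivAt_pi.mp hg k)) j)
  convert h using 1
  · ext t; simp [Matrix.mul_apply]
  · simp [Matrix.mul_apply, Finset.sum_add_distrib]

theorem itderWithin_eq {f : ℝ → Mx} {U : Set ℝ} (hU : IsOpen U) {x : ℝ} (hx : x ∈ U)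
    (k : ℕ) : iteratedDerivWithin k f U x = iteratedDeriv k f x := by
  rw [iteratedDerivWithin_eq_iteratedFDerivWithin, iteratedDeriv_eq_iteratedFDeriv,
    iteratedFDerivWithin_of_isOpen k hU hx]

theorem hasDerivAt_itder {N : ℕ} {f : ℝ → Mx} {U : Set ℝ} (hU : IsOpen U)
    (hf : ContDiffOn ℝ N f U) {x : ℝ} (hx : x ∈ U) {i : ℕ} (hi : i < N) :
    HasDerivAt (iteratedDeriv i f) (iteratedDeriv (i + 1) f x) x := by
  have hdOn : DifferentiableOn ℝ (iteratedDerivWithin i f U) U :=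
    hf.differentiableOn_iteratedDerivWithin (by exact_mod_cast hi) hU.uniqueDiffOn
  have hev : iteratedDerivWithin i f U =ᶠ[nhds x] iteratedDeriv i f :=
    Filter.eventually_of_mem (hU.mem_nhds hx) fun y hy => itderWithin_eq hU hy i
  have hdAt : DifferentiableAt ℝ (iteratedDeriv i f) x :=
    (hev.differentiableAt_iff).mp ((hdOn x hx).differentiableAt (hU.mem_nhds hx))
  have := hdAt.hasDerivAt
  rwa [← iteratedDeriv_succ] at this

theorem leibniz_point {N : ℕ} {f g : ℝ → Mx} {U : Set ℝ} (hU : IsOpen U)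
    (hf : ContDiffOn ℝ N f U) (hg : ContDiffOn ℝ N g U) :
    ∀ k, k ≤ N → ∀ x ∈ U, iteratedDeriv k (fun t => f t * g t) x =
      ∑ i ∈ Finset.range (k + 1),
        ((k.choose i : ℂ)) • (iteratedDeriv i f x * iteratedDeriv (k - i) g x) := by
  intro k
  induction k with
  | zero => intro _ x hx; simp
  | succ k ih =>
    intro hkN x hx
    have hk : k ≤ N := le_of_lt hkN
    have hev : iteratedDeriv k (fun t => f t * g t) =ᶠ[nhds x]
        fun y => ∑ i ∈ Finset.range (k + 1),
          ((k.choose i : ℂ)) • (iteratedDeriv i f y * iteratedDeriv (k - i) g y) :=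
      Filter.eventually_of_mem (hU.mem_nhds hx) fun y hy => ih hk y hy
    rw [iteratedDeriv_succ, hev.deriv_eq]
    have hD : HasDerivAt (fun y => ∑ i ∈ Finset.range (k + 1),
        ((k.choose i : ℂ)) • (iteratedDeriv i f y * iteratedDeriv (k - i) g y))
        (∑ i ∈ Finset.range (k + 1), ((k.choose i : ℂ)) •
          (iteratedDeriv (i + 1) f x * iteratedDeriv (k - i) g x +
           iteratedDeriv i f x * iteratedDeriv (k - i + 1) g x)) x := by
      refine HasDerivAt.fun_sum fun i hi => HasDerivAt.fun_const_smul _ ?_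
      exact hdmul
        (hasDerivAt_itder hU hf hx (lt_of_le_of_lt (Nat.lt_succ_iff.mp (Finset.mem_range.mp hi)) hkN))
        (hasDerivAt_itder hU hg hx (lt_of_le_of_lt (Nat.sub_le k i) hkN))
    rw [hD.deriv]
    have hrw : ∀ i ∈ Finset.range (k + 1), ((k.choose i : ℂ)) •
          (iteratedDeriv (i + 1) f x * iteratedDeriv (k - i) g x +
           iteratedDeriv i f x * iteratedDeriv (k - i + 1) g x) = ((k.choose i : ℂ)) •
          (iteratedDeriv (i + 1) f x * iteratedDeriv (k - i) g x +
           iteratedDeriv i f x * iteratedDeriv (k + 1 - i) g x) := by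
      intro i hi
      rw [Nat.sub_add_comm (Nat.lt_succ_iff.mp (Finset.mem_range.mp hi))]
    rw [Finset.sum_congr rfl hrw]
    exact pascal_sum' k fun a b => iteratedDeriv a f x * iteratedDeriv b g x

end MatrixCalc

section Resolvent
variable {n : ℕ}
local notation "Mx" => Matrix (Fin n) (Fin n) ℂ

theorem resolvent_formula {N : ℕ} {S R : ℝ → Mx} {U : Set ℝ} (hU : IsOpen U)
    (hS : ContDiff ℝ N S) (hR : ContDiffOn ℝ N R U) (ζ : ℂ)
    (hRdef : ∀ t, R t = (ζ • (1 : Mx) - S t)⁻¹)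
    (hunit : ∀ t ∈ U, IsUnit (ζ • (1 : Mx) - S t)) :
    ∀ p, p ≤ N → ∀ x ∈ U, iteratedDeriv p R x =
      ∑ c : Composition p,
        ((p.factorial : ℂ) / (((c.blocks.map Nat.factorial).prod : ℕ) : ℂ)) •
          (R x * (c.blocks.map fun i => iteratedDeriv i S x * R x).prod) := by
  intro p
  induction p using Nat.strong_induction_on with
  | _ p ih =>
  intro hpN x hx
  cases p with
  | zero =>
    rw [comp_zero_sum (fun L => ((Nat.factorial 0 : ℂ) / (((L.map Nat.factorial).prod : ℕ) : ℂ)) •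
      (R x * (L.map fun i => iteratedDeriv i S x * R x).prod))]
    simp
  | succ q =>
    set M : ℝ → Mx := fun t => ζ • (1 : Mx) - S t with hMdef
    have hMcd : ContDiff ℝ N M := contDiff_const.sub hS
    have hdetu : ∀ t ∈ U, IsUnit (M t).det := fun t ht =>
      (Matrix.isUnit_iff_isUnit_det _).mp (hunit t ht)
    have hMR : (fun t => M t * R t) =ᶠ[nhds x] fun _ => (1 : Mx) :=
      Filter.eventually_of_mem (hU.mem_nhds hx) fun t ht => by
        show M t * R t = 1
        rw [hRdef t]; exact Matrix.mul_nonsing_inv _ (hdetu t ht)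
    have hconst : iteratedDeriv (q + 1) (fun t => M t * R t) x = 0 :=
      (hMR.iteratedDeriv_eq _).trans (iteratedDeriv_const'' (Nat.succ_ne_zero q) 1 x)
    have h0 : (0 : Mx) = ∑ i ∈ Finset.range (q + 2),
        (((q + 1).choose i : ℂ)) • (iteratedDeriv i M x * iteratedDeriv (q + 1 - i) R x) := by
      rw [← hconst]
      exact leibniz_point hU hMcd.contDiffOn hR (q + 1) hpN x hx
    rw [Finset.sum_range_succ'] at h0
    simp only [Nat.succ_sub_succ, Nat.choose_zero_right, Nat.cast_one, one_smul,
      iteratedDeriv_zero, Nat.sub_zero] at h0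
    have hDM : ∀ i : ℕ, iteratedDeriv (i + 1) M x = -iteratedDeriv (i + 1) S x := by
      intro i
      rw [← iteratedDerivWithin_univ, ← iteratedDerivWithin_univ (f := S)]
      rw [iteratedDerivWithin_const_sub (Nat.succ_pos i)
        (ζ • (1 : Mx))]
      exact iteratedDerivWithin_neg S
    simp only [hDM, neg_mul, smul_neg, Finset.sum_neg_distrib] at h0
    rw [eq_comm, neg_add_eq_zero] at h0
    have hRM : R x * M x = 1 := by
      rw [hRdef]; exact Matrix.nonsing_inv_mul _ (hdetu x hx)
    have key : iteratedDeriv (q + 1) R x = ∑ i ∈ Finset.range (q + 1),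
        (((q + 1).choose (i + 1) : ℂ)) •
          (R x * (iteratedDeriv (i + 1) S x * iteratedDeriv (q - i) R x)) := by
      calc iteratedDeriv (q + 1) R x = (R x * M x) * iteratedDeriv (q + 1) R x := by
            rw [hRM, one_mul]
        _ = R x * (M x * iteratedDeriv (q + 1) R x) := by rw [mul_assoc]
        _ = R x * ∑ i ∈ Finset.range (q + 1), (((q + 1).choose (i + 1) : ℂ)) •
              (iteratedDeriv (i + 1) S x * iteratedDeriv (q - i) R x) := by rw [← h0]
        _ = _ := by
            rw [Finset.mul_sum]
            exact Finset.sum_congr rfl fun i _ => (mul_smul_comm _ _ _)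
    rw [key]
    rw [comp_sum_succ q (fun L => (((q + 1).factorial : ℂ) /
      (((L.map Nat.factorial).prod : ℕ) : ℂ)) •
        (R x * (L.map fun i => iteratedDeriv i S x * R x).prod))]
    rw [← Fin.sum_univ_eq_sum_range (fun i => (((q + 1).choose (i + 1) : ℂ)) •
      (R x * (iteratedDeriv (i + 1) S x * iteratedDeriv (q - i) R x)))]
    refine Finset.sum_congr rfl fun i _ => ?_
    have hiq : (i : ℕ) ≤ q := Nat.lt_succ_iff.mp i.isLt
    rw [ih (q - (i : ℕ)) (by omega) (by omega) x hx]
    simp only [Finset.mul_sum, mul_smul_comm, Finset.smul_sum, smul_smul]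
    refine Finset.sum_congr rfl fun c _ => ?_
    have hA : ((c.blocks.map Nat.factorial).prod : ℂ) ≠ 0 := by
      exact_mod_cast (fact_list_prod_pos c.blocks).ne'
    have hfac : ((((i : ℕ)) + 1).factorial : ℂ) ≠ 0 := by
      exact_mod_cast (Nat.factorial_pos _).ne'
    have hcf : (q + 1).choose ((i : ℕ) + 1) * ((i : ℕ) + 1).factorial
        * (q - (i : ℕ)).factorial = (q + 1).factorial := by
      have h := Nat.choose_mul_factorial_mul_factorial (Nat.succ_le_succ hiq)
      rwa [Nat.succ_sub_succ] at h
    congr 1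
    · rw [List.map_cons, List.prod_cons]
      have hcast : (((q + 1).factorial : ℕ) : ℂ) =
          ((q + 1).choose ((i : ℕ) + 1) : ℂ) * (((i : ℕ) + 1).factorial : ℂ)
            * ((q - (i : ℕ)).factorial : ℂ) := by
        exact_mod_cast congrArg (Nat.cast : ℕ → ℂ) hcf.symm
      rw [hcast, Nat.cast_mul]
      have habc : ∀ ch f1 f2 A : ℂ, f1 ≠ 0 → A ≠ 0 →
          ch * (f2 / A) = ch * f1 * f2 / (f1 * A) := by
        intros ch f1 f2 A h1 h2
        field_simp
      exact habc _ _ _ _ hfac hA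
    · rw [List.map_cons, List.prod_cons, mul_assoc]

end Resolvent

/-- Higher-order derivative of a product of two resolvents: for `C^m`
curves `S, T` and `R₁ = (ζ₁I − S)⁻¹`, `R₂ = (ζ₂I − T)⁻¹`, the `l`-th derivative of
`R₁R₂` at `t₀` is the sum, over pairs of tuples `(i₁,…,i_k) ∪ (i_{k+1},…,i_j)` of
positive integers with `i₁+ ⋯ + i_j = l` (encoded as a pair of compositions of `p` and
`l − p`), of `(l!/(i₁!⋯i_j!)) R₁ S^{(i₁)} R₁ ⋯ S^{(i_k)} R₁ R₂ T^{(i_{k+1})} R₂ ⋯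
T^{(i_j)} R₂`, all evaluated at `t₀`. -/
theorem stmt10 (n m l : ℕ) (hl : 1 ≤ l) (hlm : l ≤ m)
    (S T : ℝ → Matrix (Fin n) (Fin n) ℂ)
    (hS : ContDiff ℝ m S) (hT : ContDiff ℝ m T)
    (t₀ : ℝ) (ζ₁ ζ₂ : ℂ)
    (hζ₁ : IsUnit (ζ₁ • (1 : Matrix (Fin n) (Fin n) ℂ) - S t₀))
    (hζ₂ : IsUnit (ζ₂ • (1 : Matrix (Fin n) (Fin n) ℂ) - T t₀))
    (R₁ R₂ : ℝ → Matrix (Fin n) (Fin n) ℂ)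
    (hR₁ : ∀ t, R₁ t = (ζ₁ • (1 : Matrix (Fin n) (Fin n) ℂ) - S t)⁻¹)
    (hR₂ : ∀ t, R₂ t = (ζ₂ • (1 : Matrix (Fin n) (Fin n) ℂ) - T t)⁻¹) :
    iteratedDeriv l (fun t => R₁ t * R₂ t) t₀ =
      ∑ p ∈ Finset.range (l + 1), ∑ c₁ : Composition p, ∑ c₂ : Composition (l - p),
        ((l.factorial : ℂ) /
            (((c₁.blocks.map Nat.factorial).prod * (c₂.blocks.map Nat.factorial).prod : ℕ) : ℂ)) •
          (R₁ t₀ * (c₁.blocks.map fun i => iteratedDeriv i S t₀ * R₁ t₀).prod *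
            (R₂ t₀ * (c₂.blocks.map fun i => iteratedDeriv i T t₀ * R₂ t₀).prod)) := by
  obtain ⟨U₁, hU₁o, ht₁, hu₁, hcd₁⟩ := resolvent_smooth (contDiff_const.sub hS) hζ₁
  obtain ⟨U₂, hU₂o, ht₂, hu₂, hcd₂⟩ := resolvent_smooth (contDiff_const.sub hT) hζ₂
  have hR₁f : (fun t => (ζ₁ • (1 : Matrix (Fin n) (Fin n) ℂ) - S t)⁻¹) = R₁ := (funext hR₁).symm
  have hR₂f : (fun t => (ζ₂ • (1 : Matrix (Fin n) (Fin n) ℂ) - T t)⁻¹) = R₂ := (funext hR₂).symm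
  rw [hR₁f] at hcd₁
  rw [hR₂f] at hcd₂
  set U : Set ℝ := U₁ ∩ U₂ with hUdef
  have hUo : IsOpen U := hU₁o.inter hU₂o
  have ht : t₀ ∈ U := ⟨ht₁, ht₂⟩
  have hcd₁' : ContDiffOn ℝ m R₁ U := hcd₁.mono Set.inter_subset_left
  have hcd₂' : ContDiffOn ℝ m R₂ U := hcd₂.mono Set.inter_subset_right
  rw [leibniz_point hUo hcd₁' hcd₂' l hlm t₀ ht]
  refine Finset.sum_congr rfl fun p hp => ?_
  have hpl : p ≤ l := Nat.lt_succ_iff.mp (Finset.mem_range.mp hp)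
  rw [resolvent_formula hUo hS hcd₁' ζ₁ hR₁ (fun t ht' => hu₁ t ht'.1) p (hpl.trans hlm) t₀ ht]
  rw [resolvent_formula hUo hT hcd₂' ζ₂ hR₂ (fun t ht' => hu₂ t ht'.2) (l - p)
    ((Nat.sub_le l p).trans hlm) t₀ ht]
  rw [Finset.sum_mul_sum]
  simp only [Finset.smul_sum, smul_mul_smul_comm, smul_smul]
  refine Finset.sum_congr rfl fun c₁ _ => Finset.sum_congr rfl fun c₂ _ => ?_
  congr 1
  have hA : ((c₁.blocks.map Nat.factorial).prod : ℂ) ≠ 0 := by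
    exact_mod_cast (fact_list_prod_pos c₁.blocks).ne'
  have hB : ((c₂.blocks.map Nat.factorial).prod : ℂ) ≠ 0 := by
    exact_mod_cast (fact_list_prod_pos c₂.blocks).ne'
  have hcf : l.choose p * p.factorial * (l - p).factorial = l.factorial :=
    Nat.choose_mul_factorial_mul_factorial hpl
  have hcast : ((l.factorial : ℕ) : ℂ) =
      (l.choose p : ℂ) * (p.factorial : ℂ) * ((l - p).factorial : ℂ) := by
    exact_mod_cast congrArg (Nat.cast : ℕ → ℂ) hcf.symm
  rw [hcast, Nat.cast_mul]
  have habc : ∀ ch f1 f2 A B : ℂ, A ≠ 0 → B ≠ 0 →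
      ch * (f1 / A * (f2 / B)) = ch * f1 * f2 / (A * B) := by
    intros ch f1 f2 A B h1 h2
    field_simp
  exact habc _ _ _ _ _ hA hB
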